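/- For distinct nodes z₀,…,zₙ, the squared partial fraction expansion holds: ∏_{i=0}^{n} 1/(z − zᵢ)² = ∑_{i=0}^{n} (uᵢ² + vᵢ(z − zᵢ))/(z − zᵢ)², where uᵢ = ∏_{j≠i} 1/(zᵢ − zⱼ) and vᵢ = −2 uᵢ² ∑_{j≠i} 1/(zᵢ − zⱼ), for all z distinct from every zᵢ. -/

import Mathlib

open Finset Polynomial

private lemma SPFE.deriv_finset_prod {ι : Type*} [DecidableEq ι] (s : Finset ι)
    (f : ι → Polynomial ℂ) :
    Polynomial.derivative (∏ b ∈ s, f b)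
      = ∑ b ∈ s, (∏ a ∈ s.erase b, f a) * Polynomial.derivative (f b) := by
  induction s using Finset.induction_on with
  | empty => simp
  | @insert a s h ih =>
    rw [Finset.prod_insert h, Polynomial.derivative_mul, ih, Finset.sum_insert h,
      Finset.erase_insert h, Finset.mul_sum, mul_comm (Polynomial.derivative (f a))]
    congr 1
    refine Finset.sum_congr rfl fun b hb => ?_
    rw [Finset.erase_insert_of_ne (fun e => h (by rwa [← e] at hb)), Finset.prod_insert
      (fun hc => h (Finset.mem_of_mem_erase hc)), mul_assoc]

namespace SPFE

variable {n : ℕ} {z : Fin (n + 1) → ℂ}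

lemma hne (hz : Function.Injective z) {i j : Fin (n + 1)} (h : i ≠ j) : z i - z j ≠ 0 :=
  sub_ne_zero.2 fun e => h (hz e)

lemma U_ne (hz : Function.Injective z) (i : Fin (n + 1)) :
    (∏ j ∈ univ.erase i, (z i - z j)⁻¹) ≠ 0 := by
  rw [Finset.prod_ne_zero_iff]
  intro j hj
  exact inv_ne_zero (hne hz (Finset.mem_erase.1 hj).1.symm)

lemma eval_basis (w : ℂ) (i : Fin (n + 1)) :
    Polynomial.eval w (Lagrange.basis univ z i)
      = (∏ j ∈ univ.erase i, (z i - z j)⁻¹) * ∏ j ∈ univ.erase i, (w - z j) := by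
  rw [Lagrange.basis, eval_prod, ← prod_mul_distrib]
  exact Finset.prod_congr rfl fun j _ => by simp [Lagrange.basisDivisor]

lemma pf (hz : Function.Injective z) (w : ℂ) (hw : ∀ i, w ≠ z i) :
    ∑ i, (∏ j ∈ univ.erase i, (z i - z j)⁻¹) * (w - z i)⁻¹ = ∏ i, (w - z i)⁻¹ := by
  have hwne : ∀ j : Fin (n + 1), w - z j ≠ 0 := fun j => sub_ne_zero.2 (hw j)
  have h1 := congrArg (Polynomial.eval w) (Lagrange.sum_basis (v := z) hz.injOn univ_nonempty)
  rw [eval_finset_sum, eval_one] at h1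
  simp_rw [eval_basis] at h1
  calc ∑ i, (∏ j ∈ univ.erase i, (z i - z j)⁻¹) * (w - z i)⁻¹
      = ∑ i, ((∏ j ∈ univ.erase i, (z i - z j)⁻¹) * ∏ j ∈ univ.erase i, (w - z j))
          * ∏ j, (w - z j)⁻¹ := by
        refine Finset.sum_congr rfl fun i _ => ?_
        rw [← Finset.mul_prod_erase univ (fun j => (w - z j)⁻¹) (mem_univ i)]
        have hc : (∏ j ∈ univ.erase i, (w - z j)) * (∏ j ∈ univ.erase i, (w - z j)⁻¹) = 1 := by
          rw [← Finset.prod_mul_distrib]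
          exact Finset.prod_eq_one fun j _ => mul_inv_cancel₀ (hwne j)
        linear_combination (-((∏ j ∈ univ.erase i, (z i - z j)⁻¹) * (w - z i)⁻¹)) * hc
    _ = (∑ i, (∏ j ∈ univ.erase i, (z i - z j)⁻¹) * ∏ j ∈ univ.erase i, (w - z j))
          * ∏ j, (w - z j)⁻¹ := by rw [Finset.sum_mul]
    _ = ∏ i, (w - z i)⁻¹ := by rw [h1, one_mul]

lemma deriv_id (hz : Function.Injective z) (i : Fin (n + 1)) :
    ∑ j ∈ univ.erase i, (∏ k ∈ univ.erase j, (z j - z k)⁻¹) * (z i - z j)⁻¹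
      = -(∏ k ∈ univ.erase i, (z i - z k)⁻¹) * ∑ j ∈ univ.erase i, (z i - z j)⁻¹ := by
  have h1 := congrArg (fun p => Polynomial.eval (z i) (Polynomial.derivative p))
    (Lagrange.sum_basis (v := z) hz.injOn univ_nonempty)
  simp only [derivative_one, eval_zero, map_sum, eval_finset_sum] at h1
  have hterm : ∀ j : Fin (n + 1),
      Polynomial.eval (z i) (Polynomial.derivative (Lagrange.basis univ z j))
        = ∑ l ∈ univ.erase j,
            (∏ k ∈ (univ.erase j).erase l, ((z j - z k)⁻¹ * (z i - z k)))
              * (z j - z l)⁻¹ := by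
    intro j
    rw [Lagrange.basis, SPFE.deriv_finset_prod, eval_finset_sum]
    refine Finset.sum_congr rfl fun l _ => ?_
    have hd : Polynomial.derivative (Lagrange.basisDivisor (z j) (z l)) = C ((z j - z l)⁻¹) := by
      simp [Lagrange.basisDivisor]
    rw [eval_mul, hd, eval_C, eval_prod]
    congr 1
    exact Finset.prod_congr rfl fun k _ => by simp [Lagrange.basisDivisor]
  simp_rw [hterm] at h1
  rw [← Finset.add_sum_erase _ _ (mem_univ i)] at h1
  have hEi : ∑ l ∈ univ.erase i,
      (∏ k ∈ (univ.erase i).erase l, ((z i - z k)⁻¹ * (z i - z k))) * (z i - z l)⁻¹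
        = ∑ l ∈ univ.erase i, (z i - z l)⁻¹ := by
    refine Finset.sum_congr rfl fun l _ => ?_
    rw [Finset.prod_eq_one, one_mul]
    intro k hk
    exact inv_mul_cancel₀ (hne hz (Finset.mem_erase.1 (Finset.mem_of_mem_erase hk)).1.symm)
  rw [hEi] at h1
  have hUinv : (∏ k ∈ univ.erase i, (z i - z k)⁻¹)⁻¹ = ∏ k ∈ univ.erase i, (z i - z k) := by
    rw [Finset.prod_inv_distrib, inv_inv]
  have hEj : ∀ j ∈ univ.erase i,
      ∑ l ∈ univ.erase j,
          (∏ k ∈ (univ.erase j).erase l, ((z j - z k)⁻¹ * (z i - z k))) * (z j - z l)⁻¹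
        = ((∏ k ∈ univ.erase j, (z j - z k)⁻¹) * (z i - z j)⁻¹)
            * (∏ k ∈ univ.erase i, (z i - z k)⁻¹)⁻¹ := by
    intro j hj
    have hij : i ≠ j := (Finset.mem_erase.1 hj).1.symm
    have hiEj : i ∈ univ.erase j := Finset.mem_erase.2 ⟨hij, mem_univ i⟩
    have hjEi : j ∈ univ.erase i := hj
    have hji : z j - z i ≠ 0 := hne hz hij.symm
    have hij' : z i - z j ≠ 0 := hne hz hij
    rw [Finset.sum_eq_single_of_mem i hiEj]
    · rw [Finset.prod_mul_distrib]
      have h2 : (z j - z i)⁻¹ * ∏ k ∈ (univ.erase j).erase i, (z j - z k)⁻¹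
          = ∏ k ∈ univ.erase j, (z j - z k)⁻¹ :=
        Finset.mul_prod_erase _ (fun k => (z j - z k)⁻¹) hiEj
      have h3 : (z i - z j) * ∏ k ∈ (univ.erase i).erase j, (z i - z k)
          = ∏ k ∈ univ.erase i, (z i - z k) :=
        Finset.mul_prod_erase _ (fun k => (z i - z k)) hjEi
      have hcomm : (univ.erase j).erase i = (univ.erase i).erase j := Finset.erase_right_comm
      have hc1 : (z j - z i) * (z j - z i)⁻¹ = 1 := mul_inv_cancel₀ hji
      have hc2 : (z i - z j) * (z i - z j)⁻¹ = 1 := mul_inv_cancel₀ hij'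
      have hP1 : ∏ k ∈ (univ.erase j).erase i, (z j - z k)⁻¹
          = (z j - z i) * ∏ k ∈ univ.erase j, (z j - z k)⁻¹ := by
        linear_combination (z j - z i) * h2
          - (∏ k ∈ (univ.erase j).erase i, (z j - z k)⁻¹) * hc1
      have hP2 : ∏ k ∈ (univ.erase j).erase i, (z i - z k)
          = (z i - z j)⁻¹ * ∏ k ∈ univ.erase i, (z i - z k) := by
        rw [hcomm]
        linear_combination (z i - z j)⁻¹ * h3
          - (∏ k ∈ (univ.erase i).erase j, (z i - z k)) * hc2
      rw [hP1, hP2, hUinv]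
      linear_combination ((∏ k ∈ univ.erase j, (z j - z k)⁻¹) * (z i - z j)⁻¹
        * (∏ k ∈ univ.erase i, (z i - z k))) * hc1
    · intro l hl hli
      refine mul_eq_zero_of_left (Finset.prod_eq_zero (i := i) ?_ ?_) _
      · exact Finset.mem_erase.2 ⟨fun e => hli e.symm, hiEj⟩
      · rw [sub_self, mul_zero]
  rw [Finset.sum_congr rfl hEj] at h1
  have hUi := U_ne hz i
  have hc : (∏ k ∈ univ.erase i, (z i - z k)⁻¹)⁻¹ * (∏ k ∈ univ.erase i, (z i - z k)⁻¹) = 1 :=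
    inv_mul_cancel₀ hUi
  have hB : ∑ j ∈ univ.erase i, ((∏ k ∈ univ.erase j, (z j - z k)⁻¹) * (z i - z j)⁻¹)
        * (∏ k ∈ univ.erase i, (z i - z k)⁻¹)⁻¹
      = -∑ l ∈ univ.erase i, (z i - z l)⁻¹ := by linear_combination h1
  calc ∑ j ∈ univ.erase i, (∏ k ∈ univ.erase j, (z j - z k)⁻¹) * (z i - z j)⁻¹
      = ∑ j ∈ univ.erase i, (((∏ k ∈ univ.erase j, (z j - z k)⁻¹) * (z i - z j)⁻¹)
          * (∏ k ∈ univ.erase i, (z i - z k)⁻¹)⁻¹) * (∏ k ∈ univ.erase i, (z i - z k)⁻¹) := by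
        refine Finset.sum_congr rfl fun j _ => ?_
        linear_combination (-((∏ k ∈ univ.erase j, (z j - z k)⁻¹) * (z i - z j)⁻¹)) * hc
    _ = (∑ j ∈ univ.erase i, ((∏ k ∈ univ.erase j, (z j - z k)⁻¹) * (z i - z j)⁻¹)
          * (∏ k ∈ univ.erase i, (z i - z k)⁻¹)⁻¹) * (∏ k ∈ univ.erase i, (z i - z k)⁻¹) := by
        rw [Finset.sum_mul]
    _ = -(∏ k ∈ univ.erase i, (z i - z k)⁻¹) * ∑ j ∈ univ.erase i, (z i - z j)⁻¹ := by
        rw [hB]; ring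

end SPFE

/-- Squared partial fraction expansion: for pairwise distinct nodes `z i` and
`w` distinct from all of them,
`∏ i, 1/(w − z i)² = ∑ i, (u i² + v i (w − z i)) / (w − z i)²`,
where `u i = ∏_{j ≠ i} 1/(z i − z j)` and `v i = −2 u i² ∑_{j ≠ i} 1/(z i − z j)`. -/
theorem squared_partial_fraction_expansion (n : ℕ) (z : Fin (n + 1) → ℂ)
    (hz : Function.Injective z) (w : ℂ) (hw : ∀ i, w ≠ z i)
    (u v : Fin (n + 1) → ℂ)
    (hu : ∀ i, u i = ∏ j ∈ univ.erase i, (z i - z j)⁻¹)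
    (hv : ∀ i, v i = -2 * (u i) ^ 2 * ∑ j ∈ univ.erase i, (z i - z j)⁻¹) :
    ∏ i, ((w - z i) ^ 2)⁻¹ = ∑ i, ((u i) ^ 2 + v i * (w - z i)) / (w - z i) ^ 2 := by
  have hwne : ∀ i : Fin (n + 1), w - z i ≠ 0 := fun i => sub_ne_zero.2 (hw i)
  set a : Fin (n + 1) → ℂ := fun i => u i * (w - z i)⁻¹ with ha
  set f : Fin (n + 1) → Fin (n + 1) → ℂ :=
    fun i j => u i * u j * (z i - z j)⁻¹ * (w - z i)⁻¹ with hf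
  -- the cross terms
  have hd : ∀ i : Fin (n + 1), ∑ j ∈ univ.erase i, u j * (z i - z j)⁻¹
      = -(u i) * ∑ j ∈ univ.erase i, (z i - z j)⁻¹ := by
    intro i
    simp_rw [hu]
    exact SPFE.deriv_id hz i
  have hpair : ∀ i j : Fin (n + 1), i ≠ j → a i * a j = f i j + f j i := by
    intro i j hij
    have h1 := hwne i
    have h2 := hwne j
    have h3 := SPFE.hne hz hij
    have h4 := SPFE.hne hz hij.symm
    simp only [ha, hf]
    field_simp
    ring
  have hswap : ∑ i, ∑ j ∈ univ.erase i, f j i = ∑ i, ∑ j ∈ univ.erase i, f i j := by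
    refine Finset.sum_comm' fun x y => ?_
    simp only [Finset.mem_erase, Finset.mem_univ, and_true, true_and]
    exact ⟨fun h => h.symm, fun h => h.symm⟩
  have hcross : ∑ i, ∑ j ∈ univ.erase i, a i * a j = ∑ i, v i * (w - z i)⁻¹ := by
    calc ∑ i, ∑ j ∈ univ.erase i, a i * a j
        = ∑ i, ∑ j ∈ univ.erase i, (f i j + f j i) := by
          refine Finset.sum_congr rfl fun i _ => Finset.sum_congr rfl fun j hj => ?_
          exact hpair i j (Finset.mem_erase.1 hj).1.symm
      _ = (∑ i, ∑ j ∈ univ.erase i, f i j) + ∑ i, ∑ j ∈ univ.erase i, f j i := by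
          simp_rw [Finset.sum_add_distrib]
      _ = 2 * ∑ i, ∑ j ∈ univ.erase i, f i j := by rw [hswap]; ring
      _ = ∑ i, v i * (w - z i)⁻¹ := by
          rw [Finset.mul_sum]
          refine Finset.sum_congr rfl fun i _ => ?_
          have : ∑ j ∈ univ.erase i, f i j
              = (u i * (w - z i)⁻¹) * ∑ j ∈ univ.erase i, u j * (z i - z j)⁻¹ := by
            rw [Finset.mul_sum]
            exact Finset.sum_congr rfl fun j _ => by simp only [hf]; ring
          rw [this, hd i, hv i]
          ring
  -- main computation
  calc ∏ i, ((w - z i) ^ 2)⁻¹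
      = (∏ i, (w - z i)⁻¹) ^ 2 := by
        rw [← Finset.prod_pow]
        exact Finset.prod_congr rfl fun i _ => (inv_pow _ _).symm
    _ = (∑ i, a i) ^ 2 := by
        rw [← SPFE.pf hz w hw]
        congr 1
        exact Finset.sum_congr rfl fun i _ => by simp only [ha]; rw [hu]
    _ = ∑ i, ∑ j, a i * a j := by rw [sq, Finset.sum_mul_sum]
    _ = ∑ i, (a i ^ 2 + ∑ j ∈ univ.erase i, a i * a j) := by
        refine Finset.sum_congr rfl fun i _ => ?_
        rw [← Finset.add_sum_erase univ (fun j => a i * a j) (mem_univ i), sq]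
    _ = (∑ i, a i ^ 2) + ∑ i, ∑ j ∈ univ.erase i, a i * a j := Finset.sum_add_distrib
    _ = ∑ i, (a i ^ 2 + v i * (w - z i)⁻¹) := by rw [hcross, ← Finset.sum_add_distrib]
    _ = ∑ i, ((u i) ^ 2 + v i * (w - z i)) / (w - z i) ^ 2 := by
        refine Finset.sum_congr rfl fun i _ => ?_
        have h1 := hwne i
        simp only [ha]
        field_simp
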